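/- Let Ω ⊆ ℝ^N be Lebesgue measurable with |Ω| < ∞, let φ > 1 and r < -N. Then (1 - φ^(N+r))^(-1) times the lower φ-shell Minkowski content of Ω at infinity is at most the lower Minkowski content of Ω at infinity. -/

import Mathlib

open MeasureTheory Filter Set
open scoped ENNReal NNReal Topology

noncomputable section

/-- The `[a,b)`-shell centered at the origin in `ℝ^N`. -/
def shell (N : ℕ) (a b : ℝ) : Set (EuclideanSpace ℝ (Fin N)) :=
  {x | a ≤ ‖x‖ ∧ ‖x‖ < b}

/-- The complement of the open ball `B_t(0)` in `ℝ^N`. -/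
def farBall (N : ℕ) (t : ℝ) : Set (EuclideanSpace ℝ (Fin N)) :=
  {x | t ≤ ‖x‖}

/-- Upper φ-shell Minkowski content of `Ω` at infinity. -/
def upperShellContent (N : ℕ) (Ω : Set (EuclideanSpace ℝ (Fin N))) (φ r : ℝ) : ℝ≥0∞ :=
  Filter.limsup (fun t : ℝ =>
    volume (shell N t (φ * t) ∩ Ω) / ENNReal.ofReal (t ^ ((N : ℝ) + r))) Filter.atTop

/-- Lower φ-shell Minkowski content of `Ω` at infinity. -/
def lowerShellContent (N : ℕ) (Ω : Set (EuclideanSpace ℝ (Fin N))) (φ r : ℝ) : ℝ≥0∞ :=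
  Filter.liminf (fun t : ℝ =>
    volume (shell N t (φ * t) ∩ Ω) / ENNReal.ofReal (t ^ ((N : ℝ) + r))) Filter.atTop

/-- Upper Minkowski content of `Ω` at infinity. -/
def upperContent (N : ℕ) (Ω : Set (EuclideanSpace ℝ (Fin N))) (r : ℝ) : ℝ≥0∞ :=
  Filter.limsup (fun t : ℝ =>
    volume (farBall N t ∩ Ω) / ENNReal.ofReal (t ^ ((N : ℝ) + r))) Filter.atTop

/-- Lower Minkowski content of `Ω` at infinity. -/
def lowerContent (N : ℕ) (Ω : Set (EuclideanSpace ℝ (Fin N))) (r : ℝ) : ℝ≥0∞ :=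
  Filter.liminf (fun t : ℝ =>
    volume (farBall N t ∩ Ω) / ENNReal.ofReal (t ^ ((N : ℝ) + r))) Filter.atTop

/-- Upper φ-shell Minkowski dimension of `Ω` at infinity, as an extended real. -/
def upperShellDim (N : ℕ) (Ω : Set (EuclideanSpace ℝ (Fin N))) (φ : ℝ) : EReal :=
  sInf ((fun r : ℝ => (r : EReal)) '' {r : ℝ | upperShellContent N Ω φ r = 0})

/-- Lower φ-shell Minkowski dimension of `Ω` at infinity, as an extended real. -/
def lowerShellDim (N : ℕ) (Ω : Set (EuclideanSpace ℝ (Fin N))) (φ : ℝ) : EReal :=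
  sInf ((fun r : ℝ => (r : EReal)) '' {r : ℝ | lowerShellContent N Ω φ r = 0})

section Aux

open Filter

lemma my_le_liminf_add {α : Type*} {f : Filter α} {u v : α → ℝ≥0∞} :
    Filter.liminf u f + Filter.liminf v f ≤ Filter.liminf (fun x => u x + v x) f := by
  rcases eq_or_ne (Filter.liminf u f) 0 with hA | hA
  · rw [hA, zero_add]
    exact Filter.liminf_le_liminf (Eventually.of_forall fun x => le_add_self)
  rcases eq_or_ne (Filter.liminf v f) 0 with hB | hB
  · rw [hB, add_zero]
    exact Filter.liminf_le_liminf (Eventually.of_forall fun x => le_add_right le_rfl)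
  rw [Filter.le_liminf_iff]
  intro c hc
  obtain ⟨a, ha, b, hb, hcab⟩ := ENNReal.exists_lt_add_of_lt_add hc hA hB
  filter_upwards [Filter.eventually_lt_of_lt_liminf ha,
    Filter.eventually_lt_of_lt_liminf hb] with x hx hy
  exact hcab.trans (ENNReal.add_lt_add hx hy)

lemma my_le_liminf_sum {α : Type*} {f : Filter α} (n : ℕ) (g : ℕ → α → ℝ≥0∞) :
    ∑ k ∈ Finset.range n, Filter.liminf (g k) f ≤
      Filter.liminf (fun x => ∑ k ∈ Finset.range n, g k x) f := by
  induction n with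
  | zero => simp
  | succ n ih =>
    simp only [Finset.sum_range_succ]
    calc ∑ k ∈ Finset.range n, Filter.liminf (g k) f + Filter.liminf (g n) f
        ≤ Filter.liminf (fun x => ∑ k ∈ Finset.range n, g k x) f + Filter.liminf (g n) f :=
          add_le_add_left ih _
      _ ≤ _ := my_le_liminf_add

lemma my_liminf_le_comp {u : ℝ → ℝ≥0∞} {m : ℝ → ℝ} (hm : Tendsto m atTop atTop) :
    Filter.liminf u atTop ≤ Filter.liminf (fun t => u (m t)) atTop := by
  have h1 : Filter.liminf u atTop ≤ Filter.liminf u (Filter.map m atTop) :=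
    Filter.liminf_le_liminf_of_le hm
  have h2 : Filter.liminf u (Filter.map m atTop) = Filter.liminf (fun t => u (m t)) atTop := by
    unfold Filter.liminf
    rw [Filter.map_map]
    rfl
  rwa [h2] at h1

lemma shell_measurable (N : ℕ) (a b : ℝ) : MeasurableSet (shell N a b) :=
  measurable_norm measurableSet_Ico

end Aux

theorem lower_shell_content_le_lower_content
    (N : ℕ) (Ω : Set (EuclideanSpace ℝ (Fin N))) (hΩ : MeasurableSet Ω)
    (hfin : volume Ω < ⊤) (φ : ℝ) (hφ : 1 < φ) (r : ℝ) (hr : r < -(N : ℝ)) :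
    ENNReal.ofReal (1 / (1 - φ ^ ((N : ℝ) + r))) * lowerShellContent N Ω φ r ≤
      lowerContent N Ω r := by
  have hφ0 : (0:ℝ) < φ := lt_trans one_pos hφ
  set p : ℝ := (N : ℝ) + r with hp_def
  have hp : p < 0 := by rw [hp_def]; linarith
  set c : ℝ := φ ^ p with hc_def
  have hc0 : 0 < c := Real.rpow_pos_of_pos hφ0 p
  have hc1 : c < 1 := Real.rpow_lt_one_of_one_lt_of_neg hφ hp
  set d : ℝ≥0∞ := ENNReal.ofReal c with hd_def
  have hd0 : d ≠ 0 := by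
    simp [hd_def, ENNReal.ofReal_eq_zero, not_le, hc0]
  have hdtop : d ≠ ⊤ := ENNReal.ofReal_ne_top
  set f : ℝ → ℝ≥0∞ := fun t => volume (shell N t (φ * t) ∩ Ω) / ENNReal.ofReal (t ^ p)
    with hf_def
  set F : ℝ → ℝ≥0∞ := fun t => volume (farBall N t ∩ Ω) / ENNReal.ofReal (t ^ p)
    with hF_def
  have hL : lowerShellContent N Ω φ r = Filter.liminf f Filter.atTop := rfl
  have hC : lowerContent N Ω r = Filter.liminf F Filter.atTop := rfl
  set L : ℝ≥0∞ := lowerShellContent N Ω φ r with hL_def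
  -- main step
  have key : ∀ n : ℕ, (∑ k ∈ Finset.range n, d ^ k) * L ≤ lowerContent N Ω r := by
    intro n
    -- pointwise inequality for t > 0
    have hpt : ∀ t : ℝ, 0 < t →
        ∑ k ∈ Finset.range n, d ^ k * f (φ ^ k * t) ≤ F t := by
      intro t ht
      -- rewrite each summand
      have hterm : ∀ k : ℕ, d ^ k * f (φ ^ k * t) =
          volume (shell N (φ ^ k * t) (φ ^ (k + 1) * t) ∩ Ω) / ENNReal.ofReal (t ^ p) := by
        intro k
        have hb : φ * (φ ^ k * t) = φ ^ (k + 1) * t := by ring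
        have hofReal : ENNReal.ofReal ((φ ^ k * t) ^ p) = d ^ k * ENNReal.ofReal (t ^ p) := by
          rw [Real.mul_rpow (pow_nonneg hφ0.le k) ht.le,
            ← Real.rpow_natCast φ k, ← Real.rpow_mul hφ0.le, mul_comm (k : ℝ) p,
            Real.rpow_mul hφ0.le, Real.rpow_natCast, ← hc_def,
            ENNReal.ofReal_mul (pow_nonneg hc0.le k), ENNReal.ofReal_pow hc0.le, ← hd_def]
        rw [hf_def]
        simp only [hb, hofReal]
        rw [← mul_div_assoc,
          show d ^ k * volume (shell N (φ ^ k * t) (φ ^ (k + 1) * t) ∩ Ω)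
              / (d ^ k * ENNReal.ofReal (t ^ p))
            = volume (shell N (φ ^ k * t) (φ ^ (k + 1) * t) ∩ Ω) / ENNReal.ofReal (t ^ p)
          from ENNReal.mul_div_mul_left _ _ (pow_ne_zero k hd0) (ENNReal.pow_ne_top hdtop)]
      -- measure inequality
      have hmono : ∀ k : ℕ, (1:ℝ) ≤ φ ^ k := fun k => one_le_pow₀ hφ.le
      have hmeasure : ∑ k ∈ Finset.range n,
          volume (shell N (φ ^ k * t) (φ ^ (k + 1) * t) ∩ Ω) ≤ volume (farBall N t ∩ Ω) := by
        have hdisj : (↑(Finset.range n) : Set ℕ).PairwiseDisjoint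
            (fun k => shell N (φ ^ k * t) (φ ^ (k + 1) * t) ∩ Ω) := by
          intro i hi j hj hij
          wlog hlt : i < j generalizing i j
          · exact (this hj hi hij.symm (by omega)).symm
          refine Set.disjoint_left.2 fun x hx hx' => ?_
          have h1 : ‖x‖ < φ ^ (i + 1) * t := hx.1.2
          have h2 : φ ^ j * t ≤ ‖x‖ := hx'.1.1
          have h3 : φ ^ (i + 1) * t ≤ φ ^ j * t :=
            mul_le_mul_of_nonneg_right (pow_le_pow_right₀ hφ.le (by omega)) ht.le
          linarith
        have hmeas : ∀ k ∈ Finset.range n,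
            MeasurableSet (shell N (φ ^ k * t) (φ ^ (k + 1) * t) ∩ Ω) :=
          fun k _ => (shell_measurable N _ _).inter hΩ
        rw [← measure_biUnion_finset hdisj hmeas]
        refine measure_mono ?_
        rintro x hx
        simp only [Set.mem_iUnion] at hx
        obtain ⟨k, _, hk⟩ := hx
        refine ⟨?_, hk.2⟩
        have : t ≤ φ ^ k * t := le_mul_of_one_le_left ht.le (hmono k)
        exact le_trans this hk.1.1
      calc ∑ k ∈ Finset.range n, d ^ k * f (φ ^ k * t)
          = ∑ k ∈ Finset.range n,
              volume (shell N (φ ^ k * t) (φ ^ (k + 1) * t) ∩ Ω) / ENNReal.ofReal (t ^ p) := by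
            exact Finset.sum_congr rfl fun k _ => hterm k
        _ = (∑ k ∈ Finset.range n,
              volume (shell N (φ ^ k * t) (φ ^ (k + 1) * t) ∩ Ω)) / ENNReal.ofReal (t ^ p) := by
            simp only [div_eq_mul_inv]
            rw [Finset.sum_mul]
        _ ≤ F t := by
            rw [hF_def]
            exact ENNReal.div_le_div_right hmeasure _
    -- liminf chain
    have hstep1 : ∀ k : ℕ, d ^ k * L ≤
        Filter.liminf (fun t => d ^ k * f (φ ^ k * t)) Filter.atTop := by
      intro k
      have htend : Filter.Tendsto (fun t : ℝ => φ ^ k * t) Filter.atTop Filter.atTop :=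
        Filter.tendsto_id.const_mul_atTop (by positivity)
      have h1 : L ≤ Filter.liminf (fun t => f (φ ^ k * t)) Filter.atTop := by
        exact my_liminf_le_comp htend
      calc d ^ k * L ≤ d ^ k * Filter.liminf (fun t => f (φ ^ k * t)) Filter.atTop :=
            mul_le_mul_right h1 _
        _ = Filter.liminf (fun _ : ℝ => d ^ k) Filter.atTop *
              Filter.liminf (fun t => f (φ ^ k * t)) Filter.atTop := by
            rw [Filter.liminf_const]
        _ ≤ _ := ENNReal.le_liminf_mul
    calc (∑ k ∈ Finset.range n, d ^ k) * L = ∑ k ∈ Finset.range n, d ^ k * L :=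
          Finset.sum_mul _ _ _
      _ ≤ ∑ k ∈ Finset.range n,
            Filter.liminf (fun t => d ^ k * f (φ ^ k * t)) Filter.atTop :=
          Finset.sum_le_sum fun k _ => hstep1 k
      _ ≤ Filter.liminf (fun t => ∑ k ∈ Finset.range n, d ^ k * f (φ ^ k * t)) Filter.atTop :=
          my_le_liminf_sum n _
      _ ≤ Filter.liminf F Filter.atTop := by
          refine Filter.liminf_le_liminf ?_
          filter_upwards [Filter.eventually_gt_atTop (0:ℝ)] with t ht
          exact hpt t ht
      _ = lowerContent N Ω r := hC.symm
  -- sum the geometric series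
  have hgeom : ENNReal.ofReal (1 / (1 - c)) = ∑' k : ℕ, d ^ k := by
    rw [ENNReal.tsum_geometric, one_div,
      ENNReal.ofReal_inv_of_pos (by linarith : (0:ℝ) < 1 - c),
      ENNReal.ofReal_sub 1 hc0.le, ENNReal.ofReal_one, hd_def]
  rw [show ENNReal.ofReal (1 / (1 - φ ^ ((N:ℝ) + r))) = ENNReal.ofReal (1 / (1 - c)) from rfl,
    hgeom, ENNReal.tsum_eq_iSup_sum, ENNReal.iSup_mul]
  refine iSup_le fun s => ?_
  obtain ⟨n, hn⟩ := s.exists_nat_subset_range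
  calc (∑ k ∈ s, d ^ k) * L ≤ (∑ k ∈ Finset.range n, d ^ k) * L :=
        mul_le_mul_left (Finset.sum_le_sum_of_subset hn) _
    _ ≤ lowerContent N Ω r := key n
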